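/- For integers A, B with discriminant Δ = A² − 4B, any odd prime p, and any positive integer n, the quantity (u_{pn}(A,B) − (Δ/p)·u_n(A,B))/(pn) is a p-adic integer, where (Δ/p) is the Legendre symbol. -/

import Mathlib

open Polynomial

/-- Lucas sequence `u n (A, B)`: `u 0 = 0`, `u 1 = 1`, `u (n+2) = A * u (n+1) - B * u n`. -/
def lucasU (A B : ℤ) : ℕ → ℤ
  | 0 => 0
  | 1 => 1
  | n + 2 => A * lucasU A B (n + 1) - B * lucasU A B n

/-- Companion Lucas sequence `v n (A, B)`: `v 0 = 2`, `v 1 = A`, `v (n+2) = A * v (n+1) - B * v n`. -/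
def lucasV (A B : ℤ) : ℕ → ℤ
  | 0 => 2
  | 1 => A
  | n + 2 => A * lucasV A B (n + 1) - B * lucasV A B n

open Finset in
lemma aux_pow_sub_pow {R : Type*} [CommRing R] (p : ℕ) (hp : p.Prime) (hodd : p ≠ 2)
    (x y : R) : (p : R) ∣ x ^ p - y ^ p - (x - y) ^ p := by
  obtain ⟨q, rfl⟩ : ∃ q, p = q + 1 := ⟨p - 1, (Nat.succ_pred_eq_of_pos hp.pos).symm⟩
  have h : (x - y) ^ (q+1) = x ^ (q+1) - y ^ (q+1) +
      ∑ k ∈ range q, x ^ (k+1) * (-y) ^ (q + 1 - (k+1)) * (((q+1).choose (k+1) : ℤ) : R) := by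
    have := add_pow x (-y) (q+1)
    rw [← sub_eq_add_neg] at this
    rw [this, Finset.sum_range_succ, Finset.sum_range_succ']
    have h0 : (-y) ^ (q+1) = -(y ^ (q+1)) := (hp.odd_of_ne_two hodd).neg_pow y
    push_cast
    simp [h0]
    ring
  rw [h]
  have heq : x ^ (q+1) - y ^ (q+1) - (x ^ (q+1) - y ^ (q+1) +
      ∑ k ∈ range q, x ^ (k+1) * (-y) ^ (q+1 - (k+1)) * (((q+1).choose (k+1) : ℤ) : R))
      = -∑ k ∈ range q, x ^ (k+1) * (-y) ^ (q+1 - (k+1)) * (((q+1).choose (k+1) : ℤ) : R) := by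
    ring
  rw [heq]
  apply Dvd.dvd.neg_right
  apply Finset.dvd_sum
  intro k hk
  have hk' : k + 1 < q + 1 := by have := Finset.mem_range.mp hk; omega
  have hd : ((q+1) : ℤ) ∣ (((q+1).choose (k+1) : ℤ)) :=
    Int.natCast_dvd_natCast.mpr (Nat.Prime.dvd_choose_self hp (Nat.succ_ne_zero k) hk')
  have : ((q+1 : ℕ) : R) ∣ (((q+1).choose (k+1) : ℤ) : R) := by
    obtain ⟨c, hc⟩ := hd
    exact ⟨(c : R), by push_cast [hc]; ring⟩
  exact Dvd.dvd.mul_left this _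

lemma aux_pow_add_pow {R : Type*} [CommRing R] (p : ℕ) (hp : p.Prime) (hodd : p ≠ 2)
    (x y : R) : (p : R) ∣ x ^ p + y ^ p - (x + y) ^ p := by
  have h := aux_pow_sub_pow p hp hodd x (-y)
  have hy : (-y) ^ p = -(y^p) := (hp.odd_of_ne_two hodd).neg_pow y
  rw [hy, sub_neg_eq_add, sub_neg_eq_add] at h
  exact h

lemma root_pow (A B : ℤ) {R : Type*} [CommRing R] (γ : R) (hγ : γ * γ = A * γ - B) :
    ∀ n : ℕ, γ ^ (n + 1) = (lucasU A B (n+1) : R) * γ - (B : R) * (lucasU A B n : R)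
  | 0 => by simp [lucasU]
  | (n+1) => by
    have ih := root_pow A B γ hγ n
    have h2 : γ ^ (n+2) = γ * γ ^ (n+1) := by ring
    rw [h2, ih, show lucasU A B (n+2) = A * lucasU A B (n+1) - B * lucasU A B n from rfl]
    push_cast
    linear_combination (lucasU A B (n+1) : R) * hγ

lemma int_isUnit_padic (p : ℕ) [Fact p.Prime] (m : ℤ) (h : ¬ (p:ℤ) ∣ m) :
    IsUnit (m : ℤ_[p]) := by
  rw [PadicInt.isUnit_iff]
  refine le_antisymm (PadicInt.norm_le_one _) ?_
  by_contra hlt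
  exact h ((PadicInt.norm_int_lt_one_iff_dvd m).mp (lt_of_not_ge hlt))

lemma int_dvd_cast {R : Type*} [CommRing R] (p : ℕ) (x : ℤ) (h : (p:ℤ) ∣ x) :
    (p : R) ∣ (x : R) := by
  obtain ⟨c, hc⟩ := h
  exact ⟨(c : R), by rw [hc]; push_cast; ring⟩

lemma padic_two_cancel (p : ℕ) [Fact p.Prime] (hp2 : p ≠ 2) (j : ℕ) (x : ℤ_[p])
    (h : (p:ℤ_[p])^j ∣ 2 * x) : (p:ℤ_[p])^j ∣ x := by
  have hu : IsUnit (2 : ℤ_[p]) := by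
    apply int_isUnit_padic p 2
    intro hd
    have hd2 : p ∣ 2 := by exact_mod_cast hd
    have := Nat.le_of_dvd (by norm_num) hd2
    have h2le := (Fact.out : p.Prime).two_le
    omega
  obtain ⟨u, hu2⟩ := hu
  obtain ⟨w, hw⟩ := h
  have hinv : ((u⁻¹ : ℤ_[p]ˣ) : ℤ_[p]) * 2 = 1 := by rw [← hu2]; exact u.inv_mul
  refine ⟨((u⁻¹ : ℤ_[p]ˣ) : ℤ_[p]) * w, ?_⟩
  calc x = (((u⁻¹ : ℤ_[p]ˣ) : ℤ_[p]) * 2) * x := by rw [hinv, one_mul]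
  _ = ((u⁻¹ : ℤ_[p]ˣ) : ℤ_[p]) * (2 * x) := by ring
  _ = ((u⁻¹ : ℤ_[p]ˣ) : ℤ_[p]) * ((p:ℤ_[p])^j * w) := by rw [hw]
  _ = (p:ℤ_[p])^j * (((u⁻¹ : ℤ_[p]ˣ) : ℤ_[p]) * w) := by ring

section
variable (p : ℕ) [Fact p.Prime] (A B : ℤ)

noncomputable def fpoly : Polynomial ℤ_[p] := X^2 - C (A:ℤ_[p]) * X + C (B:ℤ_[p])

lemma fpoly_monic : (fpoly p A B).Monic := by unfold fpoly; monicity!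

lemma fpoly_natDegree : (fpoly p A B).natDegree = 2 := by unfold fpoly; compute_degree!

instance : Nontrivial (AdjoinRoot (fpoly p A B)) := by
  apply AdjoinRoot.nontrivial
  have hd : (fpoly p A B).degree = 2 := by
    rw [Polynomial.degree_eq_natDegree (fpoly_monic p A B).ne_zero, fpoly_natDegree]
    rfl
  rw [hd]
  decide

noncomputable def aroot : AdjoinRoot (fpoly p A B) := AdjoinRoot.root _

noncomputable def broot : AdjoinRoot (fpoly p A B) :=
  (A : AdjoinRoot (fpoly p A B)) - aroot p A B

lemma root_sq : (aroot p A B) * (aroot p A B)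
    = (A : AdjoinRoot (fpoly p A B)) * aroot p A B - (B : AdjoinRoot (fpoly p A B)) := by
  have h := AdjoinRoot.eval₂_root (fpoly p A B)
  unfold aroot
  conv at h => lhs; arg 3; rw [fpoly]
  simp only [Polynomial.eval₂_sub, Polynomial.eval₂_add, Polynomial.eval₂_mul,
    Polynomial.eval₂_pow, Polynomial.eval₂_X, Polynomial.eval₂_C] at h
  have hA : (AdjoinRoot.of (fpoly p A B)) ((A : ℤ_[p])) = ((A : AdjoinRoot (fpoly p A B))) :=
    map_intCast _ _
  have hB : (AdjoinRoot.of (fpoly p A B)) ((B : ℤ_[p])) = ((B : AdjoinRoot (fpoly p A B))) :=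
    map_intCast _ _
  rw [hA, hB] at h
  linear_combination h

lemma broot_sq : (broot p A B) * (broot p A B)
    = (A : AdjoinRoot (fpoly p A B)) * broot p A B - (B : AdjoinRoot (fpoly p A B)) := by
  unfold broot
  linear_combination root_sq p A B

lemma diff_eq : aroot p A B - broot p A B
    = 2 * aroot p A B - (A : AdjoinRoot (fpoly p A B)) := by
  unfold broot; ring

lemma diff_pow (n : ℕ) : (aroot p A B)^n - (broot p A B)^n
    = (lucasU A B n : AdjoinRoot (fpoly p A B)) * (aroot p A B - broot p A B) := by
  cases n with
  | zero => simp [lucasU]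
  | succ n =>
    have hA := root_pow A B (aroot p A B) (root_sq p A B) n
    have hB := root_pow A B (broot p A B) (broot_sq p A B) n
    linear_combination hA - hB

lemma diff_sq : (aroot p A B - broot p A B) * (aroot p A B - broot p A B)
    = ((A^2 - 4*B : ℤ) : AdjoinRoot (fpoly p A B)) := by
  unfold broot
  push_cast
  linear_combination (4 : AdjoinRoot (fpoly p A B)) * root_sq p A B

lemma diff_pow_p (hp2 : p ≠ 2) : (aroot p A B - broot p A B)^p
    = ((A^2 - 4*B : ℤ) : AdjoinRoot (fpoly p A B))^(p/2) * (aroot p A B - broot p A B) := by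
  have hp : p.Prime := Fact.out
  have hodd : p = 2*(p/2) + 1 := by
    have h1 : p % 2 = 1 := Nat.odd_iff.mp (hp.odd_of_ne_two hp2)
    omega
  have h2 : (aroot p A B - broot p A B)^p
      = ((aroot p A B - broot p A B)^2)^(p/2) * (aroot p A B - broot p A B) := by
    rw [← pow_mul, ← pow_succ, ← hodd]
  rw [h2, sq, diff_sq]

lemma descent (hp2 : p ≠ 2) (j : ℕ) (c : ℤ_[p])
    (h : ((p : AdjoinRoot (fpoly p A B)))^j ∣
      (algebraMap ℤ_[p] (AdjoinRoot (fpoly p A B)) c) * (aroot p A B - broot p A B)) :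
    ((p:ℤ_[p]))^j ∣ c := by
  rw [diff_eq] at h
  obtain ⟨t, ht⟩ := h
  set mon := AdjoinRoot.isAdjoinRootMonic _ (fpoly_monic p A B) with hmon
  have hroot : mon.root = AdjoinRoot.root (fpoly p A B) := by
    rw [hmon]; exact AdjoinRoot.isAdjoinRoot_root_eq_root _
  have hdeg : 1 < (fpoly p A B).natDegree := by rw [fpoly_natDegree]; norm_num
  have hcr := mon.coeff_root hdeg
  have e1 : (algebraMap ℤ_[p] (AdjoinRoot (fpoly p A B)) c) *
        (2 * aroot p A B - (A : AdjoinRoot (fpoly p A B)))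
      = (2*c) • mon.root - (c * (A:ℤ_[p])) • (1 : AdjoinRoot (fpoly p A B)) := by
    rw [hroot, Algebra.smul_def, Algebra.smul_def,
      ← map_intCast (algebraMap ℤ_[p] (AdjoinRoot (fpoly p A B))) A,
      map_mul, map_mul, map_ofNat, mul_one]
    unfold aroot
    ring
  have e2 : ((p : AdjoinRoot (fpoly p A B)))^j * t = ((p:ℤ_[p])^j) • t := by
    rw [Algebra.smul_def, map_pow, map_natCast]
  rw [e1, e2] at ht
  have key := congrArg (fun x => mon.coeff x 1) ht
  simp only [map_sub, map_smul, hcr, mon.coeff_one, Pi.sub_apply, Pi.smul_apply,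
    Pi.single_eq_same, Pi.single_eq_of_ne (by norm_num : (1:ℕ) ≠ 0), smul_eq_mul,
    mul_one, mul_zero, sub_zero] at key
  exact padic_two_cancel p hp2 j c ⟨mon.coeff t 1, key⟩

lemma sum_eq : aroot p A B + broot p A B = (A : AdjoinRoot (fpoly p A B)) := by
  unfold broot; ring

lemma dvdK_to_R (c : ℤ_[p]) (h : ((p:ℤ_[p])) ∣ c) :
    ((p : AdjoinRoot (fpoly p A B))) ∣ algebraMap ℤ_[p] (AdjoinRoot (fpoly p A B)) c := by
  have := map_dvd (algebraMap ℤ_[p] (AdjoinRoot (fpoly p A B))) h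
  rwa [map_natCast] at this

lemma descent0 (j : ℕ) (c : ℤ_[p])
    (h : ((p : AdjoinRoot (fpoly p A B)))^j ∣ algebraMap ℤ_[p] (AdjoinRoot (fpoly p A B)) c) :
    ((p:ℤ_[p]))^j ∣ c := by
  obtain ⟨t, ht⟩ := h
  set mon := AdjoinRoot.isAdjoinRootMonic _ (fpoly_monic p A B) with hmon
  have e2 : ((p : AdjoinRoot (fpoly p A B)))^j * t = ((p:ℤ_[p])^j) • t := by
    rw [Algebra.smul_def, map_pow, map_natCast]
  rw [e2] at ht
  have key := congrArg (fun x => mon.coeff x 0) ht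
  simp only [mon.coeff_algebraMap, map_smul, Pi.smul_apply, Pi.single_eq_same,
    smul_eq_mul] at key
  exact ⟨mon.coeff t 0, key⟩

end
set_option maxHeartbeats 2000000 in
theorem lucasU_padic (A B : ℤ) (p : ℕ) [Fact p.Prime] (hp2 : p ≠ 2) (n : ℕ) (hn : 0 < n) :
    ∃ z : ℤ_[p],
      ((lucasU A B (p * n) - legendreSym p (A ^ 2 - 4 * B) * lucasU A B n : ℤ) : ℤ_[p])
        = (p : ℤ_[p]) * (n : ℤ_[p]) * z := by
  have hp : p.Prime := Fact.out
  set k := n.factorization p with hk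
  set m := n / p ^ k with hm
  have hn2 : p ^ k * m = n := Nat.ordProj_mul_ordCompl_eq_self n p
  have hpm : ¬ p ∣ m := Nat.not_dvd_ordCompl hp hn.ne'
  set ε := legendreSym p (A ^ 2 - 4 * B) with hε
  set α := aroot p A B with hαdef
  set β := broot p A B with hβdef
  have hpp : p - 1 + 1 = p := Nat.succ_pred_eq_of_pos hp.pos
  have hαform : α^p = (lucasU A B p : AdjoinRoot (fpoly p A B)) * α
      - (B : AdjoinRoot (fpoly p A B)) * (lucasU A B (p-1) : AdjoinRoot (fpoly p A B)) := by
    have := root_pow A B α (root_sq p A B) (p-1)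
    rwa [hpp] at this
  have hβform : β^p = (lucasU A B p : AdjoinRoot (fpoly p A B)) * β
      - (B : AdjoinRoot (fpoly p A B)) * (lucasU A B (p-1) : AdjoinRoot (fpoly p A B)) := by
    have := root_pow A B β (broot_sq p A B) (p-1)
    rwa [hpp] at this
  have hβeq : β = (A : AdjoinRoot (fpoly p A B)) - α := by
    have := sum_eq p A B
    rw [← hαdef, ← hβdef] at this
    linear_combination this
  have hexpand : ∀ γ : AdjoinRoot (fpoly p A B), (γ^(p*m))^(p^k) = γ^(p*n) := by
    intro γ; rw [← pow_mul]; congr 1; rw [← hn2]; ring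
  have hexpand2 : ∀ γ : AdjoinRoot (fpoly p A B), (γ^m)^(p^k) = γ^n := by
    intro γ; rw [← pow_mul]; congr 1; rw [← hn2]; ring
  -- the key divisibility in the quadratic extension
  have key : ((p : AdjoinRoot (fpoly p A B)))^(k+1) ∣
      ((lucasU A B (p*n) - ε * lucasU A B n : ℤ) : AdjoinRoot (fpoly p A B)) * (α - β) := by
    by_cases hc : ((A^2 - 4*B : ℤ) : ZMod p) = 0
    · -- ε = 0
      have hε0 : ε = 0 := by rw [hε]; exact (legendreSym.eq_zero_iff p _).mpr hc
      have hpΔ : (p:ℤ) ∣ A^2 - 4*B := (ZMod.intCast_zmod_eq_zero_iff_dvd _ p).mp hc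
      have hΔR : (p : AdjoinRoot (fpoly p A B)) ∣ ((A^2 - 4*B : ℤ) : AdjoinRoot (fpoly p A B)) :=
        int_dvd_cast p _ hpΔ
      have hbase : (p : AdjoinRoot (fpoly p A B)) ∣ α^(p*m) - β^(p*m) := by
        have h1 := aux_pow_sub_pow p hp hp2 (α^m) (β^m)
        rw [← pow_mul, ← pow_mul] at h1
        have h3 : (α^m - β^m)^p = (lucasU A B m : AdjoinRoot (fpoly p A B))^p *
            (((A^2 - 4*B : ℤ) : AdjoinRoot (fpoly p A B))^(p/2) * (α - β)) := by
          rw [diff_pow p A B m, mul_pow, diff_pow_p p A B hp2]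
        have h4 : (p : AdjoinRoot (fpoly p A B)) ∣ (α^m - β^m)^p := by
          rw [h3]
          have : (p : AdjoinRoot (fpoly p A B)) ∣
              ((A^2 - 4*B : ℤ) : AdjoinRoot (fpoly p A B))^(p/2) :=
            dvd_pow hΔR (by have := hp.two_le; omega)
          exact Dvd.dvd.mul_left (this.mul_right _) _
        have h5 := dvd_add h1 h4
        rw [mul_comm m p] at h5
        convert h5 using 1
        ring
      have hlift := dvd_sub_pow_of_dvd_sub hbase k
      rw [hexpand α, hexpand β] at hlift
      have hcast : ((lucasU A B (p*n) - ε * lucasU A B n : ℤ) : AdjoinRoot (fpoly p A B)) * (α - β)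
          = α^(p*n) - β^(p*n) := by
        rw [diff_pow p A B (p*n), hε0]
        push_cast
        ring
      rw [hcast]
      convert hlift using 2
    · -- ε = ±1
      -- congruences over ℤ_[p]
      have hcu1 : (p:ℤ_[p])^1 ∣ (lucasU A B p : ℤ_[p]) - ((A^2 - 4*B : ℤ) : ℤ_[p])^(p/2) := by
        apply descent p A B hp2 1
        rw [pow_one]
        have h1 := aux_pow_sub_pow p hp hp2 α β
        rw [diff_pow p A B p, diff_pow_p p A B hp2] at h1
        convert h1 using 1
        rw [map_sub, map_intCast, map_pow, map_intCast]
        ring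
      rw [pow_one] at hcu1
      have hcu := hcu1
      have hc21 : (p:ℤ_[p])^1 ∣ (lucasU A B p : ℤ_[p]) * (A:ℤ_[p])
          - 2*(B:ℤ_[p])*(lucasU A B (p-1) : ℤ_[p]) - (A:ℤ_[p])^p := by
        apply descent0 p A B 1
        rw [pow_one]
        have h2 := aux_pow_add_pow p hp hp2 α β
        have hsum : α + β = ((A : ℤ) : AdjoinRoot (fpoly p A B)) := sum_eq p A B
        rw [hαform, hβform, hsum] at h2
        convert h2 using 1
        simp only [map_sub, map_mul, map_pow, map_ofNat, map_intCast]
        linear_combination (-(lucasU A B p : AdjoinRoot (fpoly p A B))) * hsum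
      rw [pow_one] at hc21
      have hc2 := hc21
      have hFermat : (p:ℤ_[p]) ∣ (A:ℤ_[p])^p - (A:ℤ_[p]) := by
        have hZ : (p:ℤ) ∣ A^p - A := by
          rw [← ZMod.intCast_zmod_eq_zero_iff_dvd]
          push_cast
          rw [ZMod.pow_card]
          ring
        have := int_dvd_cast (R := ℤ_[p]) p _ hZ
        convert this using 1
        push_cast
        ring
      have hEuler : (p:ℤ) ∣ (A^2 - 4*B)^(p/2) - ε := by
        rw [← ZMod.intCast_zmod_eq_zero_iff_dvd]
        push_cast
        rw [hε, legendreSym.eq_pow]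
        push_cast
        ring
      have hup : (p:ℤ_[p]) ∣ (lucasU A B p : ℤ_[p]) - (ε:ℤ_[p]) := by
        have := dvd_add hcu (int_dvd_cast (R := ℤ_[p]) p _ hEuler)
        convert this using 1
        push_cast
        ring
      have h2Bu : (p:ℤ_[p]) ∣ 2*(B:ℤ_[p])*(lucasU A B (p-1):ℤ_[p]) - ((ε:ℤ_[p]) - 1)*(A:ℤ_[p]) := by
        have := dvd_sub (dvd_sub (hup.mul_right (A:ℤ_[p])) hc2) hFermat
        convert this using 1
        ring
      rcases legendreSym.eq_one_or_neg_one (p := p) hc with hε1 | hε1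
      · -- ε = 1
        have hu1 : (p:ℤ_[p]) ∣ (lucasU A B p : ℤ_[p]) - 1 := by
          have h := hup
          rw [hε, hε1] at h
          exact_mod_cast h
        have hBu : (p:ℤ_[p]) ∣ (B:ℤ_[p]) * (lucasU A B (p-1):ℤ_[p]) := by
          have h := h2Bu
          rw [hε, hε1] at h
          have h2c : (p:ℤ_[p])^1 ∣ 2 * ((B:ℤ_[p]) * (lucasU A B (p-1):ℤ_[p])) := by
            rw [pow_one]
            convert h using 1
            push_cast
            ring
          have := padic_two_cancel p hp2 1 _ h2c
          rwa [pow_one] at this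
        have hu1R := dvdK_to_R p A B _ hu1
        have hBuR := dvdK_to_R p A B _ hBu
        simp only [map_sub, map_mul, map_one, map_intCast] at hu1R hBuR
        have hαp : (p : AdjoinRoot (fpoly p A B)) ∣ α^p - α := by
          have e : α^p - α = ((lucasU A B p : AdjoinRoot (fpoly p A B)) - 1)*α
              - (B : AdjoinRoot (fpoly p A B)) * (lucasU A B (p-1) : AdjoinRoot (fpoly p A B)) := by
            rw [hαform]; ring
          rw [e]
          exact dvd_sub (hu1R.mul_right α) hBuR
        have hβp : (p : AdjoinRoot (fpoly p A B)) ∣ β^p - β := by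
          have e : β^p - β = ((lucasU A B p : AdjoinRoot (fpoly p A B)) - 1)*β
              - (B : AdjoinRoot (fpoly p A B)) * (lucasU A B (p-1) : AdjoinRoot (fpoly p A B)) := by
            rw [hβform]; ring
          rw [e]
          exact dvd_sub (hu1R.mul_right β) hBuR
        have hbα : (p : AdjoinRoot (fpoly p A B)) ∣ α^(p*m) - α^m := by
          have hd := dvd_trans hαp (sub_dvd_pow_sub_pow (α^p) α m)
          rwa [← pow_mul] at hd
        have hbβ : (p : AdjoinRoot (fpoly p A B)) ∣ β^(p*m) - β^m := by
          have hd := dvd_trans hβp (sub_dvd_pow_sub_pow (β^p) β m)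
          rwa [← pow_mul] at hd
        have hlα := dvd_sub_pow_of_dvd_sub hbα k
        have hlβ := dvd_sub_pow_of_dvd_sub hbβ k
        rw [hexpand α, hexpand2 α] at hlα
        rw [hexpand β, hexpand2 β] at hlβ
        have hsub := dvd_sub hlα hlβ
        have hcast : ((lucasU A B (p*n) - ε * lucasU A B n : ℤ) : AdjoinRoot (fpoly p A B)) * (α - β)
            = (α^(p*n) - α^n) - (β^(p*n) - β^n) := by
          have d1 := diff_pow p A B (p*n)
          have d2 := diff_pow p A B n
          rw [hε, hε1]
          push_cast
          linear_combination d2 - d1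
        rw [hcast]
        convert hsub using 2
      · -- ε = -1
        have hu1 : (p:ℤ_[p]) ∣ (lucasU A B p : ℤ_[p]) + 1 := by
          have h := hup
          rw [hε, hε1] at h
          convert h using 1
          push_cast
          ring
        have hBA : (p:ℤ_[p]) ∣ (B:ℤ_[p]) * (lucasU A B (p-1):ℤ_[p]) + (A:ℤ_[p]) := by
          have h := h2Bu
          rw [hε, hε1] at h
          have h2c : (p:ℤ_[p])^1 ∣ 2 * ((B:ℤ_[p]) * (lucasU A B (p-1):ℤ_[p]) + (A:ℤ_[p])) := by
            rw [pow_one]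
            convert h using 1
            push_cast
            ring
          have := padic_two_cancel p hp2 1 _ h2c
          rwa [pow_one] at this
        have huR := dvdK_to_R p A B _ hu1
        have hBAR := dvdK_to_R p A B _ hBA
        simp only [map_add, map_sub, map_mul, map_one, map_intCast] at huR hBAR
        have hαp : (p : AdjoinRoot (fpoly p A B)) ∣ α^p - β := by
          have e : α^p - β = ((lucasU A B p : AdjoinRoot (fpoly p A B)) + 1)*α
              - ((B : AdjoinRoot (fpoly p A B)) * (lucasU A B (p-1) : AdjoinRoot (fpoly p A B))
                + (A : AdjoinRoot (fpoly p A B))) := by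
            rw [hαform]
            linear_combination -hβeq
          rw [e]
          exact dvd_sub (huR.mul_right α) hBAR
        have hβp : (p : AdjoinRoot (fpoly p A B)) ∣ β^p - α := by
          have e : β^p - α = ((lucasU A B p : AdjoinRoot (fpoly p A B)) + 1)*β
              - ((B : AdjoinRoot (fpoly p A B)) * (lucasU A B (p-1) : AdjoinRoot (fpoly p A B))
                + (A : AdjoinRoot (fpoly p A B))) := by
            rw [hβform]
            linear_combination -hβeq
          rw [e]
          exact dvd_sub (huR.mul_right β) hBAR
        have hbα : (p : AdjoinRoot (fpoly p A B)) ∣ α^(p*m) - β^m := by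
          have hd := dvd_trans hαp (sub_dvd_pow_sub_pow (α^p) β m)
          rwa [← pow_mul] at hd
        have hbβ : (p : AdjoinRoot (fpoly p A B)) ∣ β^(p*m) - α^m := by
          have hd := dvd_trans hβp (sub_dvd_pow_sub_pow (β^p) α m)
          rwa [← pow_mul] at hd
        have hlα := dvd_sub_pow_of_dvd_sub hbα k
        have hlβ := dvd_sub_pow_of_dvd_sub hbβ k
        rw [hexpand α, hexpand2 β] at hlα
        rw [hexpand β, hexpand2 α] at hlβ
        have hsub := dvd_sub hlα hlβ
        have hcast : ((lucasU A B (p*n) - ε * lucasU A B n : ℤ) : AdjoinRoot (fpoly p A B)) * (α - β)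
            = (α^(p*n) - β^n) - (β^(p*n) - α^n) := by
          have d1 := diff_pow p A B (p*n)
          have d2 := diff_pow p A B n
          rw [hε, hε1]
          push_cast
          linear_combination - d1 - d2
        rw [hcast]
        convert hsub using 2
  -- descend to ℤ_[p]
  have hd : ((p:ℤ_[p]))^(k+1) ∣ ((lucasU A B (p*n) - ε * lucasU A B n : ℤ) : ℤ_[p]) := by
    apply descent p A B hp2 (k+1)
    rwa [map_intCast]
  obtain ⟨w, hw⟩ := hd
  have hmu : IsUnit ((m:ℤ) : ℤ_[p]) := by
    apply int_isUnit_padic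
    exact_mod_cast hpm
  obtain ⟨v, hv⟩ := hmu
  refine ⟨((v⁻¹ : ℤ_[p]ˣ) : ℤ_[p]) * w, ?_⟩
  have hmv : ((m:ℤ) : ℤ_[p]) * ((v⁻¹ : ℤ_[p]ˣ) : ℤ_[p]) = 1 := by
    rw [← hv]; exact v.mul_inv
  have hnK : ((n:ℕ) : ℤ_[p]) = (p:ℤ_[p])^k * ((m:ℤ) : ℤ_[p]) := by
    rw [← hn2]
    push_cast
    ring
  rw [hw, hnK]
  linear_combination (-((p:ℤ_[p])^(k+1) * w)) * hmv
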